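/- For every q ∈ ℝ⁴, the matrix J(q) satisfies J(q)·q = 0, and for each l = 1, 2, 3, J(q)·(S_l q) = λ_l·‖q‖²·(S_l q), where λ_l = (1/I_l) / (Σ_{m=1}^{3} 1/I_m). In particular, if ‖q‖ = 1, then J(q) has the eigenvalues 0, λ₁, λ₂, λ₃ with corresponding orthonormal eigenvectors q, S₁q, S₂q, S₃q. -/

import Mathlib

set_option maxHeartbeats 1600000
noncomputable section
open Matrix
open scoped InnerProductSpace BigOperators

/-- `S₁ q = (−q₁, q₀, q₃, −q₂)`. -/
def S1 : Matrix (Fin 4) (Fin 4) ℝ := !![0,-1,0,0; 1,0,0,0; 0,0,0,1; 0,0,-1,0]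
/-- `S₂ q = (−q₂, −q₃, q₀, q₁)`. -/
def S2 : Matrix (Fin 4) (Fin 4) ℝ := !![0,0,-1,0; 0,0,0,-1; 1,0,0,0; 0,1,0,0]
/-- `S₃ q = (−q₃, q₂, −q₁, q₀)`. -/
def S3 : Matrix (Fin 4) (Fin 4) ℝ := !![0,0,0,-1; 0,0,1,0; 0,-1,0,0; 1,0,0,0]
/-- The family `S l`, `l = 1, 2, 3` (0-indexed). -/
def S : Fin 3 → Matrix (Fin 4) (Fin 4) ℝ := ![S1, S2, S3]

/-- `J(q) = (Σₗ (1/Iₗ) (Sₗ q)(Sₗ q)ᵀ) / (Σₗ 1/Iₗ)`. -/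
def Jmat (I : Fin 3 → ℝ) (q : Fin 4 → ℝ) : Matrix (Fin 4) (Fin 4) ℝ :=
  (∑ l : Fin 3, 1 / I l)⁻¹ • ∑ l : Fin 3, (1 / I l) • vecMulVec (S l *ᵥ q) (S l *ᵥ q)

/-- `M = 4 / (Σₗ 1/Iₗ)`. -/
def Mc (I : Fin 3 → ℝ) : ℝ := 4 / ∑ l : Fin 3, 1 / I l

/-- `λₗ = (1/Iₗ) / (Σₘ 1/Iₘ)`. -/
def lam (I : Fin 3 → ℝ) (l : Fin 3) : ℝ := (1 / I l) / ∑ m : Fin 3, 1 / I m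

/-- `J(q) q = 0` and `J(q) (Sₗ q) = λₗ ‖q‖² (Sₗ q)`; if `‖q‖ = 1` then `J(q)` has
eigenvalues `0, λ₁, λ₂, λ₃` with orthonormal eigenvectors `q, S₁q, S₂q, S₃q`. -/
theorem stmt8 (I : Fin 3 → ℝ) (hI : ∀ l, 0 < I l) (q : EuclideanSpace ℝ (Fin 4)) :
    Jmat I q *ᵥ q = 0 ∧
    (∀ l : Fin 3, Jmat I q *ᵥ (S l *ᵥ q) = (lam I l * ‖q‖ ^ 2) • (S l *ᵥ q)) ∧
    (‖q‖ = 1 →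
      Orthonormal ℝ (![q, WithLp.toLp 2 (S1 *ᵥ q), WithLp.toLp 2 (S2 *ᵥ q), WithLp.toLp 2 (S3 *ᵥ q)] : Fin 4 → EuclideanSpace ℝ (Fin 4)) ∧
      ∀ i : Fin 4,
        Jmat I q *ᵥ ((![q, WithLp.toLp 2 (S1 *ᵥ q), WithLp.toLp 2 (S2 *ᵥ q), WithLp.toLp 2 (S3 *ᵥ q)] : Fin 4 → EuclideanSpace ℝ (Fin 4)) i) =
          ![0, lam I 0, lam I 1, lam I 2] i •
            ((![q, WithLp.toLp 2 (S1 *ᵥ q), WithLp.toLp 2 (S2 *ᵥ q), WithLp.toLp 2 (S3 *ᵥ q)] : Fin 4 → EuclideanSpace ℝ (Fin 4)) i)) := by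

  have hq2 : ‖q‖ ^ 2 = q 0 ^ 2 + q 1 ^ 2 + q 2 ^ 2 + q 3 ^ 2 := by
    rw [EuclideanSpace.norm_eq, Real.sq_sqrt (by positivity)]
    simp [Fin.sum_univ_four]
  have h1 : Jmat I q *ᵥ q = 0 := by
    funext i
    fin_cases i <;>
      (simp [Jmat, S, S1, S2, S3, mulVec, dotProduct, vecMulVec, Fin.sum_univ_three,
        Fin.sum_univ_four, Matrix.vecHead, Matrix.vecTail, Finset.sum_apply,
        Matrix.smul_apply, Pi.smul_apply, smul_eq_mul]; ring)
  have h2 : ∀ l : Fin 3, Jmat I q *ᵥ (S l *ᵥ q) = (lam I l * ‖q‖ ^ 2) • (S l *ᵥ q) := by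
    intro l
    funext i
    fin_cases l <;> fin_cases i <;>
      (simp [Jmat, lam, hq2, S, S1, S2, S3, mulVec, dotProduct, vecMulVec, Fin.sum_univ_three,
        Fin.sum_univ_four, Matrix.vecHead, Matrix.vecTail, Finset.sum_apply,
        Matrix.smul_apply, Pi.smul_apply, smul_eq_mul]; ring)
  refine ⟨h1, h2, fun h => ⟨?_, ?_⟩⟩
  · have hone : q 0 ^ 2 + q 1 ^ 2 + q 2 ^ 2 + q 3 ^ 2 = 1 := by rw [← hq2, h]; norm_num
    rw [orthonormal_iff_ite]
    intro i j
    fin_cases i <;> fin_cases j <;>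
      (simp [PiLp.inner_apply, RCLike.inner_apply, WithLp.ofLp_toLp, -inner_self_eq_norm_sq_to_K, S1, S2, S3, mulVec, dotProduct,
        Fin.sum_univ_four, Matrix.vecHead, Matrix.vecTail];
       first | ring1 | linarith [hone])
  · intro i
    fin_cases i
    · simpa using h1
    · have := h2 0
      simp [S, h] at this
      simpa using this
    · have := h2 1
      simp [S, h] at this
      simpa using this
    · have := h2 2
      simp [S, h] at this
      simpa using this
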